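/- Let V satisfy the Bellman equation V = TV where T(W) = R + γ P W with 0 ≤ γ < 1, let Π be a linear projection with Π V_θ = V_θ for V_θ = Φθ, and suppose the matrix I - γ Π P is invertible. Then the componentwise identity holds: V - V_θ = (I - γ Π P)^{-1} ((V - Π V) + Φ (ΦᵀΞΦ)^{-1} K(θ)), where K(θ) = ΦᵀΞ(T V_θ - V_θ) and Π = Φ(ΦᵀΞΦ)^{-1}ΦᵀΞ. -/
import Mathlib


open Matrix

/-- Bellman error decomposition: if `V = TV` with `T(W) = R + γ P W`, `Π` is the
`Ξ`-weighted least-squares projection `Π = Φ(ΦᵀΞΦ)⁻¹ΦᵀΞ` (so `Π V_θ = V_θ` for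
`V_θ = Φθ`), and `I - γΠP` is invertible, then
`V - V_θ = (I - γΠP)⁻¹ ((V - ΠV) + Φ(ΦᵀΞΦ)⁻¹ K(θ))` where
`K(θ) = ΦᵀΞ(TV_θ - V_θ)`. -/
theorem bellman_error_decomposition {nS d : ℕ}
    (Ξ : Matrix (Fin nS) (Fin nS) ℝ) (hdiag : Ξ.IsDiag) (hpos : Ξ.PosDef)
    (Φ : Matrix (Fin nS) (Fin d) ℝ)
    (hM : IsUnit (Φᵀ * Ξ * Φ))
    (P : Matrix (Fin nS) (Fin nS) ℝ) (R : Fin nS → ℝ)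
    (γ : ℝ) (hγ0 : 0 ≤ γ) (hγ1 : γ < 1)
    (T : (Fin nS → ℝ) → (Fin nS → ℝ))
    (hT : ∀ W, T W = R + γ • P.mulVec W)
    (Pim : Matrix (Fin nS) (Fin nS) ℝ)
    (hPim : Pim = Φ * (Φᵀ * Ξ * Φ)⁻¹ * Φᵀ * Ξ)
    (hinv : IsUnit ((1 : Matrix (Fin nS) (Fin nS) ℝ) - γ • (Pim * P)))
    (V : Fin nS → ℝ) (hV : V = T V)
    (θ : Fin d → ℝ) (Vθ : Fin nS → ℝ) (hVθ : Vθ = Φ.mulVec θ)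
    (K : (Fin d → ℝ) → (Fin d → ℝ))
    (hK : ∀ θ', K θ' = (Φᵀ * Ξ).mulVec (T (Φ.mulVec θ') - Φ.mulVec θ')) :
    V - Vθ =
      ((1 : Matrix (Fin nS) (Fin nS) ℝ) - γ • (Pim * P))⁻¹.mulVec
        ((V - Pim.mulVec V) + Φ.mulVec ((Φᵀ * Ξ * Φ)⁻¹.mulVec (K θ))) := by
  set M := Φᵀ * Ξ * Φ with hMdef
  have hMdet : IsUnit M.det := (Matrix.isUnit_iff_isUnit_det _).mp hM
  have hAdet : IsUnit ((1 : Matrix (Fin nS) (Fin nS) ℝ) - γ • (Pim * P)).det :=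
    (Matrix.isUnit_iff_isUnit_det _).mp hinv
  have hMinv : M⁻¹ * M = 1 := Matrix.nonsing_inv_mul _ hMdet
  have hPiPhi : Pim * Φ = Φ := by
    rw [hPim, Matrix.mul_assoc (Φ * M⁻¹ * Φᵀ) Ξ Φ, Matrix.mul_assoc (Φ * M⁻¹) Φᵀ (Ξ * Φ),
      Matrix.mul_assoc Φ M⁻¹ (Φᵀ * (Ξ * Φ)), ← Matrix.mul_assoc Φᵀ Ξ Φ, ← hMdef, hMinv,
      Matrix.mul_one]
  have hPiV : Pim.mulVec Vθ = Vθ := by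
    rw [hVθ, Matrix.mulVec_mulVec, hPiPhi]
  have hPhiK : Φ.mulVec (M⁻¹.mulVec (K θ)) = Pim.mulVec (T Vθ - Vθ) := by
    rw [hK, ← hVθ]
    simp only [Matrix.mulVec_mulVec]
    rw [← Matrix.mul_assoc, ← Matrix.mul_assoc, ← hPim]
  have hVeq : V = R + γ • P.mulVec V := hV.trans (hT V)
  have hPVγ : γ • P.mulVec V = V - R := eq_sub_of_add_eq' hVeq.symm
  have key : ((1 : Matrix (Fin nS) (Fin nS) ℝ) - γ • (Pim * P)).mulVec (V - Vθ) =
      (V - Pim.mulVec V) + Φ.mulVec (M⁻¹.mulVec (K θ)) := by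
    rw [hPhiK, hT, hVθ]
    have hPiPhiθ : Pim.mulVec (Φ.mulVec θ) = Φ.mulVec θ := by
      rw [Matrix.mulVec_mulVec, hPiPhi]
    rw [Matrix.sub_mulVec, Matrix.one_mulVec, Matrix.smul_mulVec,
      ← Matrix.mulVec_mulVec]
    simp only [Matrix.mulVec_sub, Matrix.mulVec_add, Matrix.mulVec_smul]
    rw [hPiPhiθ, smul_sub,
      ← Matrix.mulVec_smul Pim γ (P.mulVec V), hPVγ, Matrix.mulVec_sub]
    abel
  rw [← key, Matrix.mulVec_mulVec, Matrix.nonsing_inv_mul _ hAdet, Matrix.one_mulVec]
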